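/- A commutative ring R with identity has only finitely many maximal ideals if and only if its Anderson ring R[X]_A has only finitely many maximal ideals. -/

import Mathlib

open Polynomial

/-- The multiplicative set `A = {f ∈ R[X] : f(0) = 1}` of polynomials
with constant term `1`. -/
def andersonSubmonoid (R : Type*) [CommRing R] : Submonoid (Polynomial R) where
  carrier := {f | f.coeff 0 = 1}
  one_mem' := by simp
  mul_mem' := by
    intro a b ha hb
    simp only [Set.mem_setOf_eq, Polynomial.mul_coeff_zero] at *
    rw [ha, hb, mul_one]

/-- The Anderson ring `R[X]_A`, the localization of `R[X]` at `A`. -/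
abbrev AndersonRing (R : Type*) [CommRing R] := Localization (andersonSubmonoid R)

/-- The canonical ring homomorphism `R → R[X]_A`. -/
noncomputable def andersonMap (R : Type*) [CommRing R] : R →+* AndersonRing R :=
  (algebraMap (Polynomial R) (AndersonRing R)).comp Polynomial.C

section Aux

variable {R : Type*} [CommRing R]

lemma constantCoeff_surjective : Function.Surjective (Polynomial.constantCoeff (R := R)) :=
  fun r => ⟨Polynomial.C r, by simp⟩

lemma comap_map_constantCoeff {N : Ideal (Polynomial R)} (hX : Polynomial.X ∈ N) :
    Ideal.comap (Polynomial.constantCoeff (R := R))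
      (Ideal.map (Polynomial.constantCoeff (R := R)) N) = N := by
  rw [Ideal.comap_map_of_surjective Polynomial.constantCoeff _root_.constantCoeff_surjective]
  refine sup_eq_left.mpr ?_
  intro f hf
  have hf0 : f.coeff 0 = 0 := by simpa [Ideal.mem_comap] using hf
  obtain ⟨g, hg⟩ : Polynomial.X ∣ f := Polynomial.X_dvd_iff.mpr hf0
  rw [hg]; exact N.mul_mem_right _ hX

lemma map_constantCoeff_isMaximal {N : Ideal (Polynomial R)} (hN : N.IsMaximal)
    (hX : Polynomial.X ∈ N) :
    (Ideal.map (Polynomial.constantCoeff (R := R)) N).IsMaximal := by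
  constructor
  constructor
  · intro h
    apply hN.ne_top
    have := congrArg (Ideal.comap (Polynomial.constantCoeff (R := R))) h
    rwa [comap_map_constantCoeff hX, Ideal.comap_top] at this
  · intro J hJ
    have hlt : N < Ideal.comap (Polynomial.constantCoeff (R := R)) J := by
      constructor
      · rw [← comap_map_constantCoeff hX]; exact Ideal.comap_mono hJ.le
      · intro hle
        apply hJ.ne'
        have := Ideal.map_mono (f := (Polynomial.constantCoeff : Polynomial R →+* R)) hle
        rw [Ideal.map_comap_of_surjective Polynomial.constantCoeff _root_.constantCoeff_surjective] at this
        exact le_antisymm this hJ.le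
    have := hN.1.2 _ hlt
    have h2 := congrArg (Ideal.map (Polynomial.constantCoeff (R := R))) this
    rw [Ideal.map_comap_of_surjective Polynomial.constantCoeff _root_.constantCoeff_surjective, Ideal.map_top] at h2
    exact h2

/-- Any proper ideal of `R[X]` containing `X` is disjoint from the Anderson submonoid. -/
lemma anderson_disjoint {N : Ideal (Polynomial R)} (hX : Polynomial.X ∈ N) (hne : N ≠ ⊤) :
    Disjoint ((andersonSubmonoid R : Set (Polynomial R))) (N : Set (Polynomial R)) := by
  rw [Set.disjoint_left]
  intro f hf hfN
  apply hne
  rw [Ideal.eq_top_iff_one]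
  have h1 : f - Polynomial.C (f.coeff 0) ∈ N := by
    obtain ⟨g, hg⟩ : Polynomial.X ∣ (f - Polynomial.C (f.coeff 0)) := by
      rw [Polynomial.X_dvd_iff]; simp
    rw [hg]; exact N.mul_mem_right _ hX
  have h2 : Polynomial.C (f.coeff 0) ∈ N := by
    have := N.sub_mem hfN h1; simpa using this
  have hf1 : f.coeff 0 = 1 := hf
  rw [hf1, map_one] at h2
  exact h2

/-- The extension of a maximal ideal of `R[X]` disjoint from `A` is maximal in the
Anderson ring. -/
lemma map_isMaximal_of_disjoint {N : Ideal (Polynomial R)} (hN : N.IsMaximal)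
    (hd : Disjoint ((andersonSubmonoid R : Set (Polynomial R))) (N : Set (Polynomial R))) :
    (N.map (algebraMap (Polynomial R) (AndersonRing R))).IsMaximal := by
  have hp : (N.map (algebraMap (Polynomial R) (AndersonRing R))).IsPrime :=
    IsLocalization.isPrime_of_isPrime_disjoint (andersonSubmonoid R) (AndersonRing R) N
      hN.isPrime hd
  constructor
  constructor
  · exact hp.ne_top
  · intro J hJ
    by_contra hJtop
    have hcomap_ne : Ideal.comap (algebraMap (Polynomial R) (AndersonRing R)) J ≠ ⊤ := by
      intro h
      apply hJtop
      rw [Ideal.eq_top_iff_one]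
      have : (1 : Polynomial R) ∈ Ideal.comap (algebraMap (Polynomial R) (AndersonRing R)) J := by
        rw [h]; trivial
      simpa using this
    have hle : N ≤ Ideal.comap (algebraMap (Polynomial R) (AndersonRing R)) J :=
      le_trans Ideal.le_comap_map (Ideal.comap_mono hJ.le)
    have heq : Ideal.comap (algebraMap (Polynomial R) (AndersonRing R)) J = N :=
      (hN.eq_of_le hcomap_ne hle).symm
    have : J = N.map (algebraMap (Polynomial R) (AndersonRing R)) := by
      conv_lhs => rw [← IsLocalization.map_comap (andersonSubmonoid R) (AndersonRing R) J]
      rw [Ideal.under_def, heq]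
    exact hJ.ne' this

/-- Every maximal ideal of the Anderson ring is the extension of the preimage under
`constantCoeff` of a maximal ideal of `R`. -/
lemma exists_maximal_of_maximal {m : Ideal (AndersonRing R)} (hm : m.IsMaximal) :
    ∃ M : Ideal R, M.IsMaximal ∧
      m = (Ideal.comap (Polynomial.constantCoeff (R := R)) M).map
        (algebraMap (Polynomial R) (AndersonRing R)) ∧
      Ideal.comap (algebraMap (Polynomial R) (AndersonRing R)) m =
        Ideal.comap (Polynomial.constantCoeff (R := R)) M := by
  set N := Ideal.comap (algebraMap (Polynomial R) (AndersonRing R)) m with hNdef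
  have hNp : N.IsPrime := Ideal.comap_isPrime _ m
  have hNd : Disjoint ((andersonSubmonoid R : Set (Polynomial R))) (N : Set (Polynomial R)) := by
    rw [Set.disjoint_left]
    intro f hf hfN
    have hu : IsUnit (algebraMap (Polynomial R) (AndersonRing R) f) :=
      IsLocalization.map_units (AndersonRing R) (⟨f, hf⟩ : andersonSubmonoid R)
    exact hm.ne_top (m.eq_top_of_isUnit_mem hfN hu)
  have hmN : m = N.map (algebraMap (Polynomial R) (AndersonRing R)) :=
    (IsLocalization.map_comap (andersonSubmonoid R) (AndersonRing R) m).symm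
  -- N ⊔ (X) is proper
  have hsup_ne : N ⊔ Ideal.span {Polynomial.X} ≠ (⊤ : Ideal (Polynomial R)) := by
    intro h
    have h1 : (1 : Polynomial R) ∈ N ⊔ Ideal.span {Polynomial.X} := by rw [h]; trivial
    obtain ⟨y, hy, z, hz, hyz⟩ := Submodule.mem_sup.mp h1
    obtain ⟨g, hg⟩ := Ideal.mem_span_singleton'.mp hz
    have hy0 : y.coeff 0 = 1 := by
      have := congrArg (fun p => Polynomial.coeff p 0) hyz
      simp only [Polynomial.coeff_add, Polynomial.coeff_one_zero] at this
      rw [← hg] at this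
      simpa [Polynomial.mul_coeff_zero] using this
    exact Set.disjoint_left.mp hNd hy0 hy
  obtain ⟨N'', hN''max, hN''le⟩ := Ideal.exists_le_maximal _ hsup_ne
  have hXmem : Polynomial.X ∈ N'' := hN''le (Submodule.mem_sup_right (Ideal.mem_span_singleton_self Polynomial.X))
  have hNle : N ≤ N'' := le_trans le_sup_left hN''le
  have hN''d : Disjoint ((andersonSubmonoid R : Set (Polynomial R))) (N'' : Set (Polynomial R)) :=
    anderson_disjoint hXmem hN''max.ne_top
  -- N = N''
  have hNeq : N = N'' := by
    have hmap_le : m ≤ N''.map (algebraMap (Polynomial R) (AndersonRing R)) := by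
      rw [hmN]; exact Ideal.map_mono hNle
    have hprime : (N''.map (algebraMap (Polynomial R) (AndersonRing R))).IsPrime :=
      IsLocalization.isPrime_of_isPrime_disjoint (andersonSubmonoid R) (AndersonRing R) N''
        hN''max.isPrime hN''d
    have heq : m = N''.map (algebraMap (Polynomial R) (AndersonRing R)) :=
      hm.eq_of_le hprime.ne_top hmap_le
    rw [hNdef, heq, ← Ideal.under_def,
      IsLocalization.comap_map_of_isPrime_disjoint (andersonSubmonoid R) (AndersonRing R)
        hN''max.isPrime hN''d]
  -- M := image of N'' under constantCoeff
  refine ⟨N''.map (Polynomial.constantCoeff (R := R)), ?_, ?_, ?_⟩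
  · exact map_constantCoeff_isMaximal hN''max hXmem
  · -- m = map of comap
    have h1 := comap_map_constantCoeff hXmem
    rw [h1, ← hNeq, ← hmN]
  · -- comap algebraMap m = comap constantCoeff M
    have h1 := comap_map_constantCoeff hXmem
    rw [h1, ← hNeq]

end Aux

/-- `R` has only finitely many maximal ideals iff its Anderson ring `R[X]_A`
has only finitely many maximal ideals. -/
theorem anderson_finitely_many_maximal_ideals (R : Type*) [CommRing R] :
    {M : Ideal R | M.IsMaximal}.Finite ↔
      {m : Ideal (AndersonRing R) | m.IsMaximal}.Finite := by
  constructor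
  · -- finitely many maximals in R → finitely many in the Anderson ring
    intro hfin
    have hinj : Set.InjOn
        (fun m : Ideal (AndersonRing R) =>
          Ideal.map (Polynomial.constantCoeff (R := R))
            (Ideal.comap (algebraMap (Polynomial R) (AndersonRing R)) m))
        {m : Ideal (AndersonRing R) | m.IsMaximal} := by
      intro m₁ h₁ m₂ h₂ heq
      obtain ⟨M₁, hM₁, hm₁, hc₁⟩ := exists_maximal_of_maximal h₁
      obtain ⟨M₂, hM₂, hm₂, hc₂⟩ := exists_maximal_of_maximal h₂
      simp only at heq
      have e₁ : Ideal.map (Polynomial.constantCoeff (R := R))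
          (Ideal.comap (algebraMap (Polynomial R) (AndersonRing R)) m₁) = M₁ := by
        rw [hc₁, Ideal.map_comap_of_surjective Polynomial.constantCoeff _root_.constantCoeff_surjective]
      have e₂ : Ideal.map (Polynomial.constantCoeff (R := R))
          (Ideal.comap (algebraMap (Polynomial R) (AndersonRing R)) m₂) = M₂ := by
        rw [hc₂, Ideal.map_comap_of_surjective Polynomial.constantCoeff _root_.constantCoeff_surjective]
      rw [e₁, e₂] at heq
      rw [hm₁, hm₂, heq]
    have hsub : (fun m : Ideal (AndersonRing R) =>
          Ideal.map (Polynomial.constantCoeff (R := R))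
            (Ideal.comap (algebraMap (Polynomial R) (AndersonRing R)) m)) ''
        {m : Ideal (AndersonRing R) | m.IsMaximal} ⊆ {M : Ideal R | M.IsMaximal} := by
      rintro _ ⟨m, hm, rfl⟩
      obtain ⟨M, hM, _, hc⟩ := exists_maximal_of_maximal hm
      simp only [Set.mem_setOf_eq]
      rw [hc, Ideal.map_comap_of_surjective Polynomial.constantCoeff _root_.constantCoeff_surjective]
      exact hM
    exact Set.Finite.of_finite_image (hfin.subset hsub) hinj
  · -- finitely many maximals in the Anderson ring → finitely many in R
    intro hfin
    have hinj : Set.InjOn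
        (fun M : Ideal R =>
          Ideal.map (algebraMap (Polynomial R) (AndersonRing R))
            (Ideal.comap (Polynomial.constantCoeff (R := R)) M))
        {M : Ideal R | M.IsMaximal} := by
      intro M₁ h₁ M₂ h₂ heq
      simp only [Set.mem_setOf_eq] at h₁ h₂
      have key : ∀ M : Ideal R, M.IsMaximal →
          Ideal.comap (algebraMap (Polynomial R) (AndersonRing R))
            (Ideal.map (algebraMap (Polynomial R) (AndersonRing R))
              (Ideal.comap (Polynomial.constantCoeff (R := R)) M)) =
          Ideal.comap (Polynomial.constantCoeff (R := R)) M := by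
        intro M hM
        have hX : Polynomial.X ∈ Ideal.comap (Polynomial.constantCoeff (R := R)) M := by
          simp only [Ideal.mem_comap, Polynomial.constantCoeff_apply, Polynomial.coeff_X_zero]
          exact M.zero_mem
        have hprime : (Ideal.comap (Polynomial.constantCoeff (R := R)) M).IsPrime :=
          Ideal.comap_isPrime _ M
        have hne : Ideal.comap (Polynomial.constantCoeff (R := R)) M ≠ ⊤ := hprime.ne_top
        exact IsLocalization.comap_map_of_isPrime_disjoint (andersonSubmonoid R)
          (AndersonRing R) hprime (anderson_disjoint hX hne)
      have := congrArg (Ideal.comap (algebraMap (Polynomial R) (AndersonRing R))) heq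
      simp only at this
      rw [key M₁ h₁, key M₂ h₂] at this
      have := congrArg (Ideal.map (Polynomial.constantCoeff (R := R))) this
      simpa [Ideal.map_comap_of_surjective Polynomial.constantCoeff _root_.constantCoeff_surjective] using this
    have hsub : (fun M : Ideal R =>
          Ideal.map (algebraMap (Polynomial R) (AndersonRing R))
            (Ideal.comap (Polynomial.constantCoeff (R := R)) M)) ''
        {M : Ideal R | M.IsMaximal} ⊆ {m : Ideal (AndersonRing R) | m.IsMaximal} := by
      rintro _ ⟨M, hM, rfl⟩
      simp only [Set.mem_setOf_eq] at hM ⊢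
      have hmax : (Ideal.comap (Polynomial.constantCoeff (R := R)) M).IsMaximal :=
        Ideal.comap_isMaximal_of_surjective Polynomial.constantCoeff _root_.constantCoeff_surjective (H := hM)
      have hX : Polynomial.X ∈ Ideal.comap (Polynomial.constantCoeff (R := R)) M := by
        simp only [Ideal.mem_comap, Polynomial.constantCoeff_apply, Polynomial.coeff_X_zero]
        exact M.zero_mem
      exact map_isMaximal_of_disjoint hmax (anderson_disjoint hX hmax.ne_top)
    exact Set.Finite.of_finite_image (hfin.subset hsub) hinj
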